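/- arXiv:2503.10574 — 3 statements merged into one kernel-verified Lean document; each statement's English description precedes it below -/
import Mathlib

section
/- Let θ ∈ [0,1], let (Y_i)_{i≥1} be i.i.d. Bernoulli(θ) random variables, let S_t = Y_1 + ⋯ + Y_t, and let M_t = S_t - θ·t. Then for every n ≥ 1 and every stopping time T (with respect to the natural filtration of (Y_i)) satisfying 1 ≤ T ≤ n almost surely, E[M_T²/T] ≤ 2·θ·(1-θ)·E[log₂(T+1)]. -/
open MeasureTheory ProbabilityTheory

/-- The Bernoulli(θ) law on `ℝ`: mass `θ` at `1` and mass `1-θ` at `0`. -/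
noncomputable def bernoulliLaw (θ : ℝ) : Measure ℝ :=
  ENNReal.ofReal θ • Measure.dirac (1 : ℝ) + ENNReal.ofReal (1 - θ) • Measure.dirac (0 : ℝ)

lemma bernoulliLaw_integral (θ : ℝ) (hθ0 : 0 ≤ θ) (hθ1 : θ ≤ 1) (f : ℝ → ℝ) :
    ∫ x, f x ∂(bernoulliLaw θ) = θ * f 1 + (1 - θ) * f 0 := by
  have hd1 : Integrable f (Measure.dirac (1:ℝ)) :=
    (integrable_const (f 1)).congr (ae_eq_dirac f).symm
  have hd0 : Integrable f (Measure.dirac (0:ℝ)) :=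
    (integrable_const (f 0)).congr (ae_eq_dirac f).symm
  rw [bernoulliLaw, integral_add_measure
      (hd1.smul_measure ENNReal.ofReal_ne_top) (hd0.smul_measure ENNReal.ofReal_ne_top),
    integral_smul_measure, integral_smul_measure, integral_dirac, integral_dirac,
    ENNReal.toReal_ofReal hθ0, ENNReal.toReal_ofReal (by linarith)]
  simp [smul_eq_mul]

lemma bernoulliLaw_ae (θ : ℝ) : ∀ᵐ x ∂(bernoulliLaw θ), x = 0 ∨ x = 1 := by
  rw [ae_iff]
  have hsub : {x : ℝ | ¬(x = 0 ∨ x = 1)} ⊆ ({1}ᶜ : Set ℝ) ∩ ({0}ᶜ : Set ℝ) := by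
    intro x hx; push_neg at hx; exact ⟨hx.2, hx.1⟩
  refine le_antisymm ?_ zero_le
  calc bernoulliLaw θ {x | ¬(x = 0 ∨ x = 1)}
      ≤ bernoulliLaw θ (({1}ᶜ : Set ℝ) ∩ ({0}ᶜ : Set ℝ)) := measure_mono hsub
    _ = 0 := by
        rw [bernoulliLaw]
        simp [Measure.dirac_apply' _ ((measurableSet_singleton (1:ℝ)).compl.inter
          (measurableSet_singleton (0:ℝ)).compl)]

/-- Stopped centered sum. -/
noncomputable def mstM {Ω : Type*} (Y : ℕ → Ω → ℝ) (θ : ℝ) (T : Ω → ℕ) (s : ℕ) (ω : Ω) : ℝ :=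
  ∑ i ∈ Finset.range s, if i < T ω then Y i ω - θ else 0

/-- Stopped time as a real-valued sum. -/
noncomputable def mstT {Ω : Type*} (T : Ω → ℕ) (s : ℕ) (ω : Ω) : ℝ :=
  ∑ i ∈ Finset.range s, if i < T ω then (1:ℝ) else 0

lemma filter_lt_range (t s : ℕ) :
    Finset.filter (fun i => i < t) (Finset.range s) = Finset.range (min t s) := by
  ext i; simp [Nat.lt_min, and_comm]

lemma mstM_eq {Ω : Type*} (Y : ℕ → Ω → ℝ) (θ : ℝ) (T : Ω → ℕ) (s : ℕ) (ω : Ω) :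
    mstM Y θ T s ω = ∑ i ∈ Finset.range (min (T ω) s), (Y i ω - θ) := by
  rw [mstM, ← Finset.sum_filter, filter_lt_range]

lemma mstM_succ {Ω : Type*} (Y : ℕ → Ω → ℝ) (θ : ℝ) (T : Ω → ℕ) (s : ℕ) (ω : Ω) :
    mstM Y θ T (s+1) ω = mstM Y θ T s ω + (if s < T ω then Y s ω - θ else 0) := by
  rw [mstM, mstM, Finset.sum_range_succ]

lemma mstT_eq {Ω : Type*} (T : Ω → ℕ) (s : ℕ) (ω : Ω) :
    mstT T s ω = ((min (T ω) s : ℕ) : ℝ) := by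
  rw [mstT, ← Finset.sum_filter, filter_lt_range]
  simp

lemma mstT_succ {Ω : Type*} (T : Ω → ℕ) (s : ℕ) (ω : Ω) :
    mstT T (s+1) ω = mstT T s ω + (if s < T ω then (1:ℝ) else 0) := by
  rw [mstT, mstT, Finset.sum_range_succ]

theorem stmt11 {Ω : Type*} [MeasurableSpace Ω] (P : Measure Ω) [IsProbabilityMeasure P]
    (θ : ℝ) (hθ : θ ∈ Set.Icc (0:ℝ) 1)
    -- `Y i` is the `(i+1)`-st coin flip, so `Y 0, Y 1, …` play the roles of `Y_1, Y_2, …`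
    (Y : ℕ → Ω → ℝ) (hYmeas : ∀ i, Measurable (Y i))
    (hindep : iIndepFun Y P)
    (hlaw : ∀ i, P.map (Y i) = bernoulliLaw θ)
    (n : ℕ) (hn : 1 ≤ n)
    (T : Ω → ℕ) (hT1 : ∀ ω, 1 ≤ T ω) (hTn : ∀ ω, T ω ≤ n)
    -- `T` is a stopping time for the natural filtration `σ(Y_1, …, Y_t)`
    (hTstop : ∀ t : ℕ,
      MeasurableSet[⨆ i ∈ Finset.range t, MeasurableSpace.comap (Y i) inferInstance]
        {ω | T ω = t}) :
    ∫ ω, ((∑ i ∈ Finset.range (T ω), Y i ω) - θ * (T ω : ℝ)) ^ 2 / (T ω : ℝ) ∂P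
      ≤ 2 * θ * (1 - θ) * ∫ ω, Real.logb 2 ((T ω : ℝ) + 1) ∂P := by
  obtain ⟨hθ0, hθ1⟩ := hθ
  set σ2 : ℝ := θ * (1 - θ) with hσ2def
  set F : ℕ → MeasurableSpace Ω :=
    fun t => ⨆ i ∈ Finset.range t, MeasurableSpace.comap (Y i) inferInstance with hFdef
  -- basic σ-algebra facts
  have hFle : ∀ t, F t ≤ (inferInstance : MeasurableSpace Ω) :=
    fun t => iSup₂_le fun i _ => (hYmeas i).comap_le
  have hcomap_le_F : ∀ i t, i < t → MeasurableSpace.comap (Y i) inferInstance ≤ F t := by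
    intro i t hit
    exact le_iSup₂ (f := fun i (_ : i ∈ Finset.range t) =>
      MeasurableSpace.comap (Y i) inferInstance) i (Finset.mem_range.mpr hit)
  have hYF : ∀ i t, i < t → Measurable[F t] (Y i) :=
    fun i t hit => Measurable.of_comap_le (hcomap_le_F i t hit)
  have hFmono : Monotone F := by
    intro a b hab
    exact biSup_mono fun i hi => Finset.mem_range.mpr (lt_of_lt_of_le (Finset.mem_range.mp hi) hab)
  have hTsetF : ∀ t, MeasurableSet[F t] {ω | T ω = t} := hTstop
  have hTset : ∀ t, MeasurableSet {ω | T ω = t} := fun t => hFle t _ (hTsetF t)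
  have hTmeas : Measurable T := measurable_to_countable' fun t => hTset t
  have hTleF : ∀ k s, k ≤ s → MeasurableSet[F s] {ω | T ω ≤ k} := by
    intro k s hks
    have : {ω | T ω ≤ k} = ⋃ j ∈ Finset.range (k+1), {ω | T ω = j} := by
      ext ω; simp [Nat.lt_succ_iff]
    rw [this]
    refine MeasurableSet.biUnion (Finset.range (k+1)).countable_toSet (fun j hj => ?_)
    have hjs : j ≤ s := le_trans (Nat.lt_succ_iff.mp (Finset.mem_range.mp hj)) hks
    exact hFmono hjs _ (hTsetF j)
  have hAF : ∀ s, MeasurableSet[F s] {ω | s < T ω} := by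
    intro s
    have : {ω | s < T ω} = {ω | T ω ≤ s}ᶜ := by ext ω; simp
    rw [this]; exact (hTleF s s le_rfl).compl
  -- independence
  have hkey : ∀ (s : ℕ) (f : Ω → ℝ) (g : ℝ → ℝ), Measurable[F s] f → Integrable f P →
      Measurable g → Integrable (fun ω => g (Y s ω)) P →
      ∫ ω, f ω * g (Y s ω) ∂P = (∫ ω, f ω ∂P) * ∫ ω, g (Y s ω) ∂P := by
    intro s f g hf hfi hg hgi
    have hI : iIndep (fun i => MeasurableSpace.comap (Y i) inferInstance) P :=
      (iIndepFun_iff_iIndep _ _ _).mp hindep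
    have hdisj : Disjoint {i : ℕ | i < s} ({s} : Set ℕ) := by
      simp [Set.disjoint_singleton_right]
    have hsup := indep_iSup_of_disjoint (fun i => (hYmeas i).comap_le) hI hdisj
    have h1 : (⨆ i ∈ {i : ℕ | i < s}, MeasurableSpace.comap (Y i) inferInstance) = F s := by
      rw [hFdef]
      apply le_antisymm
      · exact iSup₂_le fun i hi => le_iSup₂ (f := fun i (_ : i ∈ Finset.range s) =>
          MeasurableSpace.comap (Y i) inferInstance) i (Finset.mem_range.mpr hi)
      · exact iSup₂_le fun i hi => le_iSup₂ (f := fun i (_ : i ∈ {i : ℕ | i < s}) =>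
          MeasurableSpace.comap (Y i) inferInstance) i (Finset.mem_range.mp hi)
    have h2 : (⨆ i ∈ ({s} : Set ℕ), MeasurableSpace.comap (Y i) inferInstance)
        = MeasurableSpace.comap (Y s) inferInstance := by
      apply le_antisymm
      · exact iSup₂_le fun i hi => by rw [Set.mem_singleton_iff] at hi; subst hi; exact le_rfl
      · exact le_iSup₂ (f := fun i (_ : i ∈ ({s} : Set ℕ)) =>
          MeasurableSpace.comap (Y i) inferInstance) s rfl
    rw [h1, h2] at hsup
    have hfun : IndepFun f (fun ω => g (Y s ω)) P := by
      rw [IndepFun_iff_Indep]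
      refine indep_of_indep_of_le_right (indep_of_indep_of_le_left hsup hf.comap_le) ?_
      have : (fun ω => g (Y s ω)) = g ∘ Y s := rfl
      rw [this, ← MeasurableSpace.comap_comp]
      exact MeasurableSpace.comap_mono hg.comap_le
    exact hfun.integral_fun_mul_eq_mul_integral hfi.aestronglyMeasurable hgi.aestronglyMeasurable

  -- moments
  have hmap : ∀ (s : ℕ) (g : ℝ → ℝ), Measurable g →
      ∫ ω, g (Y s ω) ∂P = θ * g 1 + (1-θ) * g 0 := by
    intro s g hg
    rw [← bernoulliLaw_integral θ hθ0 hθ1 g, ← hlaw s,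
      integral_map (hYmeas s).aemeasurable hg.aestronglyMeasurable]
  have hae : ∀ᵐ ω ∂P, ∀ i, Y i ω = 0 ∨ Y i ω = 1 := by
    rw [ae_all_iff]
    intro i
    have h0 := bernoulliLaw_ae θ
    rw [← hlaw i] at h0
    have hmeaset : MeasurableSet {x : ℝ | x = 0 ∨ x = 1} := by
      have : {x : ℝ | x = 0 ∨ x = 1} = {0, 1} := by ext x; simp
      rw [this]; exact (measurableSet_singleton _).union (measurableSet_singleton _)
    exact (ae_map_iff (hYmeas i).aemeasurable hmeaset).mp h0
  have hbY : ∀ᵐ ω ∂P, ∀ i, |Y i ω - θ| ≤ 1 := by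
    filter_upwards [hae] with ω hω i
    rcases hω i with h | h <;> rw [h, abs_le] <;> constructor <;> linarith
  -- integrability helper
  have hint : ∀ (f : Ω → ℝ) (C : ℝ), Measurable f → (∀ᵐ ω ∂P, |f ω| ≤ C) → Integrable f P :=
    fun f C hm hb => (integrable_const C).mono' hm.aestronglyMeasurable
      (by simpa [Real.norm_eq_abs] using hb)
  -- measurability of stopped processes
  have hltF : ∀ i s, i < s → MeasurableSet[F s] {ω | i < T ω} := by
    intro i s his
    have : {ω | i < T ω} = {ω | T ω ≤ i}ᶜ := by ext ω; simp
    rw [this]; exact (hTleF i s his.le).compl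
  have hMsmeasF : ∀ s, Measurable[F s] (mstM Y θ T s) := by
    intro s
    rw [show mstM Y θ T s = fun ω => ∑ i ∈ Finset.range s,
      (if i < T ω then Y i ω - θ else 0) from rfl]
    apply Finset.measurable_sum
    intro i hi
    have hi' : i < s := Finset.mem_range.mp hi
    exact Measurable.ite (hltF i s hi') ((hYF i s hi').sub measurable_const) measurable_const
  have hMsmeas : ∀ s, Measurable (mstM Y θ T s) := fun s => (hMsmeasF s).mono (hFle s) le_rfl
  have hmsmeas : ∀ s, Measurable (mstT T s) := by
    intro s
    apply Finset.measurable_sum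
    intro i _
    exact Measurable.ite (hTmeas measurableSet_Ioi) measurable_const measurable_const
  -- bounds
  have hMsb : ∀ s, ∀ᵐ ω ∂P, |mstM Y θ T s ω| ≤ (n:ℝ) := by
    intro s
    filter_upwards [hbY] with ω hω
    rw [mstM_eq]
    calc |∑ i ∈ Finset.range (min (T ω) s), (Y i ω - θ)|
        ≤ ∑ i ∈ Finset.range (min (T ω) s), |Y i ω - θ| :=
          Finset.abs_sum_le_sum_abs _ _
      _ ≤ ∑ i ∈ Finset.range (min (T ω) s), 1 := Finset.sum_le_sum fun i _ => hω i
      _ = ((min (T ω) s : ℕ) : ℝ) := by simp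
      _ ≤ (n:ℝ) := by
          have : min (T ω) s ≤ n := le_trans (min_le_left _ _) (hTn ω)
          exact_mod_cast this
  have hmsb : ∀ s, ∀ᵐ ω ∂P, |mstT T s ω| ≤ (n:ℝ) := by
    intro s
    refine Filter.Eventually.of_forall fun ω => ?_
    rw [mstT_eq, abs_of_nonneg (by positivity)]
    have : min (T ω) s ≤ n := le_trans (min_le_left _ _) (hTn ω)
    exact_mod_cast this
  have hMsi : ∀ s, Integrable (mstM Y θ T s) P := fun s => hint _ _ (hMsmeas s) (hMsb s)
  have hMs2i : ∀ s, Integrable (fun ω => (mstM Y θ T s ω)^2) P := by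
    intro s
    refine hint _ ((n:ℝ)^2) ((hMsmeas s).pow_const 2) ?_
    filter_upwards [hMsb s] with ω hω
    rw [abs_pow]
    exact pow_le_pow_left₀ (abs_nonneg _) hω 2
  have hmsi : ∀ s, Integrable (mstT T s) P := fun s => hint _ _ (hmsmeas s) (hmsb s)
  have hYθi : ∀ s, Integrable (fun ω => Y s ω - θ) P := by
    intro s
    refine hint _ 1 ((hYmeas s).sub measurable_const) ?_
    filter_upwards [hbY] with ω hω using hω s
  have hYθ2i : ∀ s, Integrable (fun ω => (Y s ω - θ)^2) P := by
    intro s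
    refine hint _ 1 (((hYmeas s).sub measurable_const).pow_const 2) ?_
    filter_upwards [hbY] with ω hω
    rw [abs_pow]
    calc |Y s ω - θ|^2 ≤ 1^2 := pow_le_pow_left₀ (abs_nonneg _) (hω s) 2
      _ = 1 := one_pow 2
  have hEX : ∀ s, ∫ ω, (Y s ω - θ) ∂P = 0 := by
    intro s
    rw [hmap s (fun x => x - θ) (measurable_id.sub measurable_const)]
    ring
  have hEX2 : ∀ s, ∫ ω, (Y s ω - θ)^2 ∂P = σ2 := by
    intro s
    rw [hmap s (fun x => (x - θ)^2) ((measurable_id.sub measurable_const).pow_const 2), hσ2def]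
    ring
  -- Wald's second identity for the stopped process
  have wald : ∀ s, ∫ ω, (mstM Y θ T s ω)^2 ∂P = σ2 * ∫ ω, mstT T s ω ∂P := by
    intro s
    induction s with
    | zero => simp [mstM, mstT]
    | succ s ih =>
      set A : Set Ω := {ω | s < T ω} with hAdef
      have hAmF : MeasurableSet[F s] A := hAF s
      have hAm : MeasurableSet A := hFle s _ hAmF
      have hdec : ∀ ω, (mstM Y θ T (s+1) ω)^2
          = (mstM Y θ T s ω)^2 + (2 * (A.indicator (mstM Y θ T s) ω * (Y s ω - θ))
            + A.indicator (fun _ => (1:ℝ)) ω * (Y s ω - θ)^2) := by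
        intro ω
        by_cases h : s < T ω
        · have hmem : ω ∈ A := h
          rw [mstM_succ, if_pos h, Set.indicator_of_mem hmem, Set.indicator_of_mem hmem]
          ring
        · have hmem : ω ∉ A := h
          rw [mstM_succ, if_neg h, Set.indicator_of_notMem hmem,
            Set.indicator_of_notMem hmem]
          ring
      have hmdec : ∀ ω, mstT T (s+1) ω = mstT T s ω + A.indicator (fun _ => (1:ℝ)) ω := by
        intro ω
        by_cases h : s < T ω
        · rw [mstT_succ, if_pos h, Set.indicator_of_mem (show ω ∈ A from h)]
        · rw [mstT_succ, if_neg h, Set.indicator_of_notMem (show ω ∉ A from h)]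
      have hfb : Integrable (fun ω => 2 * (A.indicator (mstM Y θ T s) ω * (Y s ω - θ))) P := by
        refine hint _ (2 * (n:ℝ)) ((((hMsmeas s).indicator hAm).mul
          ((hYmeas s).sub measurable_const)).const_mul 2) ?_
        filter_upwards [hMsb s, hbY] with ω h1 h2
        have hind : |A.indicator (mstM Y θ T s) ω| ≤ (n:ℝ) := by
          by_cases h : ω ∈ A
          · rwa [Set.indicator_of_mem h]
          · rw [Set.indicator_of_notMem h]; simpa using (abs_nonneg _).trans h1
        calc |2 * (A.indicator (mstM Y θ T s) ω * (Y s ω - θ))|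
            = 2 * (|A.indicator (mstM Y θ T s) ω| * |Y s ω - θ|) := by
              rw [abs_mul, abs_mul]; norm_num
          _ ≤ 2 * ((n:ℝ) * 1) :=
              mul_le_mul_of_nonneg_left (mul_le_mul hind (h2 s) (abs_nonneg _)
                (Nat.cast_nonneg n)) (by norm_num)
          _ = 2 * (n:ℝ) := by ring
      have hcb : Integrable (fun ω => A.indicator (fun _ => (1:ℝ)) ω * (Y s ω - θ)^2) P := by
        refine hint _ 1 ((measurable_const.indicator hAm).mul
          (((hYmeas s).sub measurable_const).pow_const 2)) ?_
        filter_upwards [hbY] with ω h2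
        have hind : |A.indicator (fun _ => (1:ℝ)) ω| ≤ 1 := by
          by_cases h : ω ∈ A
          · rw [Set.indicator_of_mem h]; norm_num
          · rw [Set.indicator_of_notMem h]; norm_num
        calc |A.indicator (fun _ => (1:ℝ)) ω * (Y s ω - θ)^2|
            = |A.indicator (fun _ => (1:ℝ)) ω| * |Y s ω - θ|^2 := by rw [abs_mul, abs_pow]
          _ ≤ 1 * 1^2 := by
              refine mul_le_mul hind (pow_le_pow_left₀ (abs_nonneg _) (h2 s) 2)
                (by positivity) (by norm_num)
          _ = 1 := by norm_num
      have hindb : ∀ᵐ ω ∂P, |A.indicator (mstM Y θ T s) ω| ≤ (n:ℝ) := by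
        filter_upwards [hMsb s] with ω h1
        by_cases h : ω ∈ A
        · rwa [Set.indicator_of_mem h]
        · rw [Set.indicator_of_notMem h]; simpa using (abs_nonneg _).trans h1
      have hindi : Integrable (A.indicator (mstM Y θ T s)) P :=
        hint _ _ ((hMsmeas s).indicator hAm) hindb
      have hind1b : ∀ᵐ ω ∂P, |A.indicator (fun _ => (1:ℝ)) ω| ≤ 1 := by
        refine Filter.Eventually.of_forall fun ω => ?_
        by_cases h : ω ∈ A
        · rw [Set.indicator_of_mem h]; norm_num
        · rw [Set.indicator_of_notMem h]; norm_num
      have hind1i : Integrable (A.indicator (fun _ => (1:ℝ))) P :=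
        hint _ 1 (measurable_const.indicator hAm) hind1b
      have hcross : ∫ ω, A.indicator (mstM Y θ T s) ω * (Y s ω - θ) ∂P = 0 := by
        rw [hkey s (A.indicator (mstM Y θ T s)) (fun x => x - θ)
          ((hMsmeasF s).indicator hAmF) hindi
          (measurable_id.sub measurable_const) (hYθi s), hEX s, mul_zero]
      have hsq : ∫ ω, A.indicator (fun _ => (1:ℝ)) ω * (Y s ω - θ)^2 ∂P
          = (P A).toReal * σ2 := by
        rw [hkey s (A.indicator (fun _ => (1:ℝ))) (fun x => (x - θ)^2)
          (measurable_const.indicator hAmF) hind1i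
          ((measurable_id.sub measurable_const).pow_const 2) (hYθ2i s), hEX2 s,
          integral_indicator_const (1:ℝ) hAm, smul_eq_mul, mul_one, measureReal_def]
      have lhs : ∫ ω, (mstM Y θ T (s+1) ω)^2 ∂P
          = ∫ ω, (mstM Y θ T s ω)^2 ∂P
            + (2 * ∫ ω, A.indicator (mstM Y θ T s) ω * (Y s ω - θ) ∂P
              + (P A).toReal * σ2) := by
        have hfc : Integrable (fun ω => 2 * (A.indicator (mstM Y θ T s) ω * (Y s ω - θ))
            + A.indicator (fun _ => (1:ℝ)) ω * (Y s ω - θ)^2) P := hfb.add hcb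
        rw [integral_congr_ae (Filter.Eventually.of_forall hdec),
          integral_add (hMs2i s) hfc, integral_add hfb hcb,
          integral_const_mul, hsq]
      have rhs : ∫ ω, mstT T (s+1) ω ∂P = ∫ ω, mstT T s ω ∂P + (P A).toReal := by
        rw [integral_congr_ae (Filter.Eventually.of_forall hmdec),
          integral_add (hmsi s) ((integrable_const (1:ℝ)).indicator hAm),
          integral_indicator_const (1:ℝ) hAm, smul_eq_mul, mul_one, measureReal_def]
      rw [lhs, rhs, hcross, ih]
      ring

  -- coefficients
  set c : ℕ → ℝ := fun s => if s < n then 1/((s:ℝ)*((s:ℝ)+1)) else 1/(n:ℝ) with hcdef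
  have hc0 : ∀ s, 0 ≤ c s := by
    intro s; rw [hcdef]; dsimp only
    split <;> positivity
  have htel : ∀ t m : ℕ, t ≤ m → ∑ s ∈ Finset.Ico t m, ((1:ℝ)/(s:ℝ) - 1/((s:ℝ)+1))
      = 1/(t:ℝ) - 1/(m:ℝ) := by
    intro t m
    induction m with
    | zero => intro h; interval_cases t; simp
    | succ m ihm =>
      intro h
      by_cases h' : t ≤ m
      · rw [Finset.sum_Ico_succ_top h', ihm h']
        push_cast
        ring
      · have ht : t = m + 1 := by omega
        subst ht
        simp
  have hcsum : ∀ t : ℕ, 1 ≤ t → t ≤ n → ∑ s ∈ Finset.Icc t n, c s = 1/(t:ℝ) := by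
    intro t ht1 htn
    rw [← Finset.Ico_add_one_right_eq_Icc, Finset.sum_Ico_succ_top htn]
    have hc_n : c n = 1/(n:ℝ) := by rw [hcdef]; simp
    have hstep : ∑ s ∈ Finset.Ico t n, c s
        = ∑ s ∈ Finset.Ico t n, ((1:ℝ)/(s:ℝ) - 1/((s:ℝ)+1)) := by
      refine Finset.sum_congr rfl fun s hs => ?_
      obtain ⟨hs1, hs2⟩ := Finset.mem_Ico.mp hs
      rw [hcdef]; dsimp only; rw [if_pos hs2]
      have hs0 : (0:ℝ) < (s:ℝ) := by exact_mod_cast lt_of_lt_of_le Nat.zero_lt_one (le_trans ht1 hs1)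
      field_simp
      ring
    rw [hstep, htel t n htn, hc_n]
    ring
  set H : ℕ → ℝ := fun t => ∑ k ∈ Finset.range t, (1:ℝ)/((k:ℝ)+1) with hHdef
  have hcmin : ∀ t : ℕ, 1 ≤ t → t ≤ n →
      ∑ s ∈ Finset.Icc 1 n, c s * ((min t s : ℕ) : ℝ) = H t := by
    intro t ht1 htn
    have hsplit : ∑ s ∈ Finset.Ico 1 t, c s * ((min t s : ℕ):ℝ)
        + ∑ s ∈ Finset.Ico t (n+1), c s * ((min t s : ℕ):ℝ)
        = ∑ s ∈ Finset.Ico 1 (n+1), c s * ((min t s : ℕ):ℝ) :=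
      Finset.sum_Ico_consecutive _ ht1 (by omega)
    rw [← Finset.Ico_add_one_right_eq_Icc, ← hsplit]
    have h1 : ∑ s ∈ Finset.Ico 1 t, c s * ((min t s : ℕ):ℝ)
        = ∑ s ∈ Finset.Ico 1 t, (1:ℝ)/((s:ℝ)+1) := by
      refine Finset.sum_congr rfl fun s hs => ?_
      obtain ⟨hs1, hs2⟩ := Finset.mem_Ico.mp hs
      rw [min_eq_right hs2.le, hcdef]; dsimp only
      rw [if_pos (lt_of_lt_of_le hs2 htn)]
      have hs0 : (0:ℝ) < (s:ℝ) := by exact_mod_cast hs1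
      field_simp
    have h2 : ∑ s ∈ Finset.Ico t (n+1), c s * ((min t s : ℕ):ℝ)
        = (1/(t:ℝ)) * (t:ℝ) := by
      calc ∑ s ∈ Finset.Ico t (n+1), c s * ((min t s:ℕ):ℝ)
          = ∑ s ∈ Finset.Ico t (n+1), c s * (t:ℝ) := by
            refine Finset.sum_congr rfl fun s hs => ?_
            rw [min_eq_left (Finset.mem_Ico.mp hs).1]
        _ = (∑ s ∈ Finset.Ico t (n+1), c s) * (t:ℝ) := (Finset.sum_mul _ _ _).symm
        _ = (1/(t:ℝ)) * (t:ℝ) := by rw [Finset.Ico_add_one_right_eq_Icc, hcsum t ht1 htn]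
    have ht0 : (0:ℝ) < (t:ℝ) := by exact_mod_cast ht1
    have hHsplit : H t = 1 + ∑ s ∈ Finset.Ico 1 t, (1:ℝ)/((s:ℝ)+1) := by
      rw [hHdef]; dsimp only
      rw [Finset.range_eq_Ico, Finset.sum_eq_sum_Ico_succ_bot ht1]
      norm_num
    rw [h1, h2, hHsplit, one_div_mul_cancel ht0.ne']
    ring
  have hHlog : ∀ t : ℕ, 1 ≤ t → H t ≤ 2 * Real.logb 2 ((t:ℝ)+1) := by
    intro t ht1
    have hharm : H t = (harmonic t : ℝ) := by
      rw [hHdef, harmonic]; push_cast; simp [one_div]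
    have hub : (harmonic t : ℝ) ≤ 1 + Real.log t := harmonic_le_one_add_log t
    have ht0 : (0:ℝ) < (t:ℝ) := by exact_mod_cast ht1
    have hL2 : Real.log 2 ≤ Real.log ((t:ℝ)+1) := by
      apply Real.log_le_log (by norm_num)
      have : (1:ℝ) ≤ (t:ℝ) := by exact_mod_cast ht1
      linarith
    have hlt : Real.log (t:ℝ) ≤ Real.log ((t:ℝ)+1) := Real.log_le_log ht0 (by linarith)
    have h2pos : (0:ℝ) < Real.log 2 := Real.log_pos (by norm_num)
    have hl1 : Real.log 2 ≤ 1 := by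
      have := Real.log_le_sub_one_of_pos (show (0:ℝ) < 2 by norm_num); linarith
    have hlogt0 : 0 ≤ Real.log (t:ℝ) := Real.log_nonneg (by exact_mod_cast ht1)
    rw [hharm, Real.logb]
    rw [show 2 * (Real.log ((t:ℝ)+1) / Real.log 2)
      = (2 * Real.log ((t:ℝ)+1)) / Real.log 2 from by ring, le_div_iff₀ h2pos]
    nlinarith
  -- identify the integrand
  have hMn : ∀ ω, mstM Y θ T n ω
      = (∑ i ∈ Finset.range (T ω), Y i ω) - θ * (T ω : ℝ) := by
    intro ω
    rw [mstM_eq, min_eq_left (hTn ω), Finset.sum_sub_distrib, Finset.sum_const,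
      Finset.card_range, nsmul_eq_mul, mul_comm ((T ω : ℝ)) θ]
  have h0 : ∫ ω, ((∑ i ∈ Finset.range (T ω), Y i ω) - θ * (T ω : ℝ)) ^ 2 / (T ω : ℝ) ∂P
      = ∫ ω, (mstM Y θ T n ω)^2 / (T ω : ℝ) ∂P :=
    integral_congr_ae (Filter.Eventually.of_forall fun ω => by simp only [hMn])
  rw [h0]
  -- pointwise bounds
  have hptw : ∀ ω, (mstM Y θ T n ω)^2 / (T ω : ℝ)
      ≤ ∑ s ∈ Finset.Icc 1 n, c s * (mstM Y θ T s ω)^2 := by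
    intro ω
    have hMeq : ∀ s, T ω ≤ s → mstM Y θ T s ω = mstM Y θ T n ω := by
      intro s hs
      rw [mstM_eq, mstM_eq, min_eq_left hs, min_eq_left (hTn ω)]
    have h1 : (mstM Y θ T n ω)^2 / (T ω : ℝ)
        = ∑ s ∈ Finset.Icc (T ω) n, c s * (mstM Y θ T s ω)^2 := by
      calc (mstM Y θ T n ω)^2 / (T ω:ℝ)
          = (∑ s ∈ Finset.Icc (T ω) n, c s) * (mstM Y θ T n ω)^2 := by
            rw [hcsum (T ω) (hT1 ω) (hTn ω)]; ring
        _ = ∑ s ∈ Finset.Icc (T ω) n, c s * (mstM Y θ T n ω)^2 := Finset.sum_mul _ _ _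
        _ = ∑ s ∈ Finset.Icc (T ω) n, c s * (mstM Y θ T s ω)^2 :=
            Finset.sum_congr rfl fun s hs => by rw [hMeq s (Finset.mem_Icc.mp hs).1]
    rw [h1]
    refine Finset.sum_le_sum_of_subset_of_nonneg ?_ fun s _ _ => mul_nonneg (hc0 s) (sq_nonneg _)
    exact Finset.Icc_subset_Icc (hT1 ω) le_rfl
  have hptw2 : ∀ ω, ∑ s ∈ Finset.Icc 1 n, c s * mstT T s ω = H (T ω) := by
    intro ω
    calc ∑ s ∈ Finset.Icc 1 n, c s * mstT T s ω
        = ∑ s ∈ Finset.Icc 1 n, c s * ((min (T ω) s : ℕ):ℝ) :=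
          Finset.sum_congr rfl fun s _ => by rw [mstT_eq]
      _ = H (T ω) := hcmin (T ω) (hT1 ω) (hTn ω)
  -- integrability for the final comparison
  have hTcast : Measurable (fun ω => (T ω : ℝ)) :=
    (measurable_from_top (f := fun k : ℕ => (k:ℝ))).comp hTmeas
  have hGi : Integrable (fun ω => (mstM Y θ T n ω)^2 / (T ω : ℝ)) P := by
    refine hint _ ((n:ℝ)^2) (((hMsmeas n).pow_const 2).div hTcast) ?_
    filter_upwards [hMsb n] with ω h1
    have hT0 : (1:ℝ) ≤ (T ω : ℝ) := by exact_mod_cast hT1 ω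
    rw [abs_of_nonneg (div_nonneg (sq_nonneg _) (Nat.cast_nonneg _))]
    calc (mstM Y θ T n ω)^2 / (T ω:ℝ) ≤ (mstM Y θ T n ω)^2 :=
          div_le_self (sq_nonneg _) hT0
      _ = |mstM Y θ T n ω|^2 := (sq_abs _).symm
      _ ≤ (n:ℝ)^2 := pow_le_pow_left₀ (abs_nonneg _) h1 2
  have hSi : Integrable (fun ω => ∑ s ∈ Finset.Icc 1 n, c s * (mstM Y θ T s ω)^2) P :=
    integrable_finset_sum _ (fun s _ => (hMs2i s).const_mul (c s))
  have hHmono : ∀ t, t ≤ n → H t ≤ H n := by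
    intro t ht
    rw [hHdef]; dsimp only
    refine Finset.sum_le_sum_of_subset_of_nonneg ?_ fun k _ _ => by positivity
    exact Finset.range_subset_range.mpr ht
  have hH0 : ∀ t : ℕ, 0 ≤ H t := by
    intro t; rw [hHdef]; dsimp only; positivity
  have hHi : Integrable (fun ω => H (T ω)) P := by
    refine hint _ (H n) ((measurable_from_top (f := fun k : ℕ => H k)).comp hTmeas) ?_
    refine Filter.Eventually.of_forall fun ω => ?_
    rw [abs_of_nonneg (hH0 _)]
    exact hHmono _ (hTn ω)
  have hLi : Integrable (fun ω => Real.logb 2 ((T ω : ℝ)+1)) P := by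
    refine hint _ (Real.logb 2 ((n:ℝ)+1))
      ((measurable_from_top (f := fun k : ℕ => Real.logb 2 ((k:ℝ)+1))).comp hTmeas) ?_
    refine Filter.Eventually.of_forall fun ω => ?_
    have h1 : (1:ℝ) ≤ (T ω : ℝ) + 1 := by
      have : (0:ℝ) ≤ (T ω : ℝ) := Nat.cast_nonneg _
      linarith
    rw [abs_of_nonneg (Real.logb_nonneg one_lt_two h1)]
    refine Real.logb_le_logb_of_le one_lt_two (by linarith) ?_
    have : (T ω : ℝ) ≤ (n:ℝ) := by exact_mod_cast hTn ω
    linarith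
  have hσ2nn : 0 ≤ σ2 := by rw [hσ2def]; nlinarith
  calc ∫ ω, (mstM Y θ T n ω)^2 / (T ω:ℝ) ∂P
      ≤ ∫ ω, ∑ s ∈ Finset.Icc 1 n, c s * (mstM Y θ T s ω)^2 ∂P :=
        integral_mono hGi hSi hptw
    _ = ∑ s ∈ Finset.Icc 1 n, c s * (σ2 * ∫ ω, mstT T s ω ∂P) := by
        rw [integral_finset_sum _ (fun s _ => (hMs2i s).const_mul (c s))]
        exact Finset.sum_congr rfl fun s _ => by rw [integral_const_mul, wald s]
    _ = σ2 * ∑ s ∈ Finset.Icc 1 n, ∫ ω, c s * mstT T s ω ∂P := by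
        rw [Finset.mul_sum]
        refine Finset.sum_congr rfl fun s _ => ?_
        rw [integral_const_mul]
        ring
    _ = σ2 * ∫ ω, ∑ s ∈ Finset.Icc 1 n, c s * mstT T s ω ∂P := by
        rw [integral_finset_sum _ (fun s _ => (hmsi s).const_mul (c s))]
    _ = σ2 * ∫ ω, H (T ω) ∂P := by
        rw [integral_congr_ae (Filter.Eventually.of_forall hptw2)]
    _ ≤ σ2 * (2 * ∫ ω, Real.logb 2 ((T ω:ℝ)+1) ∂P) := by
        refine mul_le_mul_of_nonneg_left ?_ hσ2nn
        have h2 : ∫ ω, H (T ω) ∂P ≤ ∫ ω, 2 * Real.logb 2 ((T ω:ℝ)+1) ∂P :=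
          integral_mono hHi (hLi.const_mul 2) (fun ω => hHlog (T ω) (hT1 ω))
        rwa [integral_const_mul] at h2
    _ = 2 * θ * (1-θ) * ∫ ω, Real.logb 2 ((T ω:ℝ)+1) ∂P := by rw [hσ2def]; ring
end

section
/- There is a universal constant C < ∞ such that for every θ ∈ [0,1], every n ≥ 1, every sequence (Y_i)_{i≥1} of i.i.d. Bernoulli(θ) random variables with partial sums S_t = Y_1 + ⋯ + Y_t, and every stopping time T with respect to the natural filtration of (Y_i) satisfying 1 ≤ T ≤ n almost surely, E[T·(H_B(θ) - H_B(S_T/T))] ≤ C·E[log₂(T+1)]. -/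
open MeasureTheory ProbabilityTheory

/-- Binary entropy `H_B(p) = -p log₂ p - (1-p) log₂ (1-p)` (with `0 log 0 = 0`). -/
noncomputable def binEnt (p : ℝ) : ℝ :=
  -(p * Real.logb 2 p) - (1 - p) * Real.logb 2 (1 - p)

lemma binEnt_zero : binEnt 0 = 0 := by simp [binEnt]
lemma binEnt_one : binEnt 1 = 0 := by simp [binEnt]

lemma choose_mul_le (t s : ℕ) (hs : s ≤ t) :
    t.choose s * s^s * (t-s)^(t-s) ≤ t^t := by
  calc t.choose s * s^s * (t-s)^(t-s) = s^s * (t-s)^(t-s) * t.choose s := by ring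
  _ ≤ ∑ k ∈ Finset.range (t+1), s^k * (t-s)^(t-k) * t.choose k := by
      apply Finset.single_le_sum (f := fun k => s^k * (t-s)^(t-k) * t.choose k)
      · intro i _; positivity
      · simp [Nat.lt_succ_iff, hs]
  _ = (s + (t-s))^t := (add_pow s (t-s) t).symm
  _ = t^t := by rw [Nat.add_sub_cancel' hs]

lemma sum_inv_eq (n : ℕ) : ∑ t ∈ Finset.Icc 1 n, (1:ℝ)/(t*(t+1)) = 1 - 1/(n+1) := by
  induction n with
  | zero => simp
  | succ m ih =>
    rw [Finset.sum_Icc_succ_top (by omega : 1 ≤ m + 1), ih]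
    have h1 : ((m:ℝ)+1) ≠ 0 := by positivity
    have h2 : ((m:ℝ)+2) ≠ 0 := by positivity
    push_cast
    field_simp
    ring

lemma logb_choose_le (t s : ℕ) (ht : 1 ≤ t) (hs : s ≤ t) :
    Real.logb 2 (t.choose s) ≤ t * binEnt (s / t) := by
  have ht0 : (0:ℝ) < t := by exact_mod_cast ht
  rcases Nat.eq_zero_or_pos s with rfl | hs0
  · simp [binEnt_zero, Nat.choose_zero_right]
  rcases eq_or_lt_of_le hs with rfl | hst
  · simp [Nat.choose_self, div_self ht0.ne', binEnt_one]
  -- now 0 < s < t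
  have hs0' : (0:ℝ) < s := by exact_mod_cast hs0
  have hts : 0 < t - s := by omega
  have hts' : (0:ℝ) < ((t - s : ℕ):ℝ) := by exact_mod_cast hts
  have hcast : ((t - s : ℕ):ℝ) = (t:ℝ) - s := by
    push_cast [Nat.cast_sub hs]; ring
  have hchoose : (0:ℝ) < t.choose s := by exact_mod_cast Nat.choose_pos hs
  have hst' : (0:ℝ) < (t:ℝ) - s := by rw [← hcast]; exact hts'
  -- entropy identity
  have hent : (t:ℝ) * binEnt (s / t) =
      t * Real.logb 2 t - s * Real.logb 2 s - ((t:ℝ) - s) * Real.logb 2 ((t:ℝ) - s) := by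
    have h1 : (1:ℝ) - (s:ℝ)/t = ((t:ℝ) - s)/t := by field_simp
    rw [binEnt, h1, Real.logb_div hs0'.ne' ht0.ne',
      Real.logb_div (by rw [← hcast] at *; exact hts'.ne') ht0.ne']
    field_simp
    ring
  -- cast the nat inequality
  have hnat := choose_mul_le t s hs
  have hreal : (t.choose s : ℝ) * (s:ℝ)^s * ((t:ℝ)-s)^(t-s) ≤ (t:ℝ)^t := by
    have := (Nat.cast_le (α := ℝ)).2 hnat
    push_cast at this
    rwa [hcast] at this
  have hpos1 : (0:ℝ) < ((t:ℝ)-s)^(t-s) := pow_pos hst' _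
  have hpos2 : (0:ℝ) < (s:ℝ)^s := pow_pos hs0' _
  have hlog := Real.logb_le_logb_of_le (b := 2) one_lt_two
      (by positivity) hreal
  rw [Real.logb_mul (by positivity) hpos1.ne',
    Real.logb_mul hchoose.ne' hpos2.ne',
    Real.logb_pow, Real.logb_pow, Real.logb_pow] at hlog
  rw [hent]
  have h2 : ((t - s : ℕ):ℝ) * Real.logb 2 ((t:ℝ) - s) = ((t:ℝ) - s) * Real.logb 2 ((t:ℝ)-s) := by
    rw [hcast]
  rw [hcast] at hlog
  linarith


lemma sum01 {Ω : Type} (Y : ℕ → Ω → ℝ) (ω : Ω) :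
    ∀ t : ℕ, (∀ i, i < t → (Y i ω = 0 ∨ Y i ω = 1)) →
      ∃ s : ℕ, s ≤ t ∧ (∑ i ∈ Finset.range t, Y i ω) = (s:ℝ) := by
  intro t
  induction t with
  | zero => intro _; exact ⟨0, le_refl 0, by simp⟩
  | succ m ih =>
    intro h
    obtain ⟨s, hs, hsum⟩ := ih (fun i hi => h i (Nat.lt_succ_of_lt hi))
    rcases h m (Nat.lt_succ_self m) with h0 | h1
    · exact ⟨s, Nat.le_succ_of_le hs, by rw [Finset.sum_range_succ, hsum, h0, add_zero]⟩
    · exact ⟨s + 1, Nat.succ_le_succ hs, by rw [Finset.sum_range_succ, hsum, h1]; push_cast; ring⟩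

lemma rep_lemma {Ω : Type} [MeasurableSpace Ω] (P : Measure Ω) [IsProbabilityMeasure P]
    (n : ℕ) (A : ℕ → ℕ → Set Ω) (hA : ∀ t s, MeasurableSet (A t s))
    (hdisj : ∀ t s t' s', (t ≠ t' ∨ s ≠ s') → ∀ ω, ω ∈ A t s → ω ∉ A t' s')
    (hcov : ∀ᵐ ω ∂P, ∃ t, t ∈ Finset.Icc 1 n ∧ ∃ s, s ∈ Finset.range (t+1) ∧ ω ∈ A t s)
    (f : Ω → ℝ) (F : ℕ → ℕ → ℝ)
    (hf : ∀ t ∈ Finset.Icc 1 n, ∀ s ∈ Finset.range (t+1), ∀ ω ∈ A t s, f ω = F t s) :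
    ∫ ω, f ω ∂P
      = ∑ t ∈ Finset.Icc 1 n, ∑ s ∈ Finset.range (t+1), F t s * (P (A t s)).toReal := by
  have hae : f =ᵐ[P] fun ω => ∑ t ∈ Finset.Icc 1 n, ∑ s ∈ Finset.range (t+1),
      Set.indicator (A t s) (fun _ => F t s) ω := by
    filter_upwards [hcov] with ω hω
    obtain ⟨t, ht, s, hs, hωA⟩ := hω

    have h1 : ∀ t' ∈ Finset.Icc 1 n, t' ≠ t →
        (∑ s' ∈ Finset.range (t'+1), Set.indicator (A t' s') (fun _ => F t' s') ω) = 0 :=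
      fun t' _ ht' => Finset.sum_eq_zero fun s' _ =>
        Set.indicator_of_notMem (hdisj t s t' s' (Or.inl (Ne.symm ht')) ω hωA) _
    have h2 : ∀ s' ∈ Finset.range (t+1), s' ≠ s →
        Set.indicator (A t s') (fun _ => F t s') ω = 0 :=
      fun s' _ hs' =>
        Set.indicator_of_notMem (hdisj t s t s' (Or.inr (Ne.symm hs')) ω hωA) _
    rw [hf t ht s hs ω hωA, Finset.sum_eq_single_of_mem t ht h1,
      Finset.sum_eq_single_of_mem s hs h2, Set.indicator_of_mem hωA]
  rw [integral_congr_ae hae,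
    integral_finset_sum _ (fun t _ => integrable_finset_sum _
      (fun s _ => (integrable_const (F t s)).indicator (hA t s)))]
  refine Finset.sum_congr rfl fun t _ => ?_
  rw [integral_finset_sum _ (fun s _ => (integrable_const (F t s)).indicator (hA t s))]
  refine Finset.sum_congr rfl fun s _ => ?_
  rw [integral_indicator_const (F t s) (hA t s), smul_eq_mul, mul_comm, measureReal_def]

lemma bernoulliLaw_one (θ : ℝ) : bernoulliLaw θ {1} = ENNReal.ofReal θ := by
  simp [bernoulliLaw, Measure.dirac_apply]

lemma bernoulliLaw_zero (θ : ℝ) : bernoulliLaw θ {0} = ENNReal.ofReal (1 - θ) := by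
  simp [bernoulliLaw, Measure.dirac_apply]

lemma bernoulliLaw_01 (θ : ℝ) (hθ0 : 0 ≤ θ) (hθ1 : θ ≤ 1) :
    bernoulliLaw θ ({0, 1} : Set ℝ) = 1 := by
  simp only [bernoulliLaw, Measure.add_apply, Measure.smul_apply, smul_eq_mul,
    Measure.dirac_apply]
  rw [Set.indicator_of_mem (by simp) 1, Set.indicator_of_mem (by simp) 1]
  simp only [Pi.one_apply, mul_one]
  rw [← ENNReal.ofReal_add hθ0 (by linarith)]
  norm_num

lemma law_point {Ω : Type} [MeasurableSpace Ω] (P : Measure Ω) {Y : Ω → ℝ} (hY : Measurable Y)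
    {θ : ℝ} (hlaw : P.map Y = bernoulliLaw θ) (c : ℝ) :
    P (Y ⁻¹' {c}) = bernoulliLaw θ {c} := by
  rw [← hlaw, Measure.map_apply hY (measurableSet_singleton c)]

lemma ae01 {Ω : Type} [MeasurableSpace Ω] (P : Measure Ω) [IsProbabilityMeasure P]
    {θ : ℝ} (hθ0 : 0 ≤ θ) (hθ1 : θ ≤ 1) {Y : Ω → ℝ} (hY : Measurable Y)
    (hlaw : P.map Y = bernoulliLaw θ) :
    ∀ᵐ ω ∂P, Y ω = 0 ∨ Y ω = 1 := by
  have hs : MeasurableSet ({0, 1} : Set ℝ) :=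
    (measurableSet_singleton 0).union (measurableSet_singleton 1)
  have h1 : P (Y ⁻¹' {0, 1}) = 1 := by
    rw [← Measure.map_apply hY hs, hlaw, bernoulliLaw_01 θ hθ0 hθ1]
  have hc : P ((Y ⁻¹' ({0, 1} : Set ℝ))ᶜ) = 0 := by
    rw [measure_compl (hY hs) (measure_ne_top P _), measure_univ, h1, tsub_self]
  rw [ae_iff]
  refine measure_mono_null (fun ω hω => ?_) hc
  simp only [Set.mem_compl_iff, Set.mem_preimage, Set.mem_insert_iff, Set.mem_singleton_iff]
  simpa using hω

lemma binom_bound {Ω : Type} [mΩ : MeasurableSpace Ω] (P : Measure Ω) [IsProbabilityMeasure P]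
    {θ : ℝ} (hθ0 : 0 ≤ θ) (hθ1 : θ ≤ 1) {Y : ℕ → Ω → ℝ} (hYm : ∀ i, Measurable (Y i))
    (hYindep : iIndepFun Y P)
    (hYlaw : ∀ i, P.map (Y i) = bernoulliLaw θ) (t s : ℕ) :
    (P {ω | (∑ i ∈ Finset.range t, Y i ω) = (s:ℝ)}).toReal
      ≤ t.choose s * θ^s * (1-θ)^(t-s) := by
  set E : Finset ℕ → Set Ω :=
    fun A => ⋂ i ∈ Finset.range t, Y i ⁻¹' {if i ∈ A then (1:ℝ) else 0} with hE
  have hae : ∀ᵐ ω ∂P, ∀ i, i < t → (Y i ω = 0 ∨ Y i ω = 1) := by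
    rw [ae_all_iff]
    intro i
    filter_upwards [ae01 P hθ0 hθ1 (hYm i) (hYlaw i)] with ω h _
    exact h
  have hsub : {ω | (∑ i ∈ Finset.range t, Y i ω) = (s:ℝ)}
      ≤ᵐ[P] ⋃ A ∈ Finset.powersetCard s (Finset.range t), E A := by
    filter_upwards [hae] with ω h01 hω
    set A := (Finset.range t).filter (fun i => Y i ω = 1) with hA
    have hcard : (∑ i ∈ Finset.range t, Y i ω) = (A.card : ℝ) := by
      rw [← Finset.sum_filter_add_sum_filter_not (Finset.range t) (fun i => Y i ω = 1)]
      have e1 : (∑ i ∈ A, Y i ω) = (A.card : ℝ) := by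
        rw [Finset.sum_congr rfl (fun i hi => (Finset.mem_filter.1 hi).2)]
        simp [hA]
      have e2 : (∑ i ∈ (Finset.range t).filter (fun i => ¬ Y i ω = 1), Y i ω) = 0 := by
        refine Finset.sum_eq_zero fun i hi => ?_
        have hi' := Finset.mem_filter.1 hi
        rcases h01 i (Finset.mem_range.1 hi'.1) with h | h
        · exact h
        · exact absurd h hi'.2
      rw [e1, e2, add_zero]
    have hAcard : A.card = s := by
      have : ((A.card : ℕ) : ℝ) = (s : ℝ) := by rw [← hcard]; exact hω
      exact_mod_cast this
    refine Set.mem_biUnion (Finset.mem_powersetCard.2 ⟨Finset.filter_subset _ _, hAcard⟩) ?_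
    refine Set.mem_iInter₂.2 fun i hi => ?_
    simp only [Set.mem_preimage, Set.mem_singleton_iff]
    split_ifs with hmem
    · exact (Finset.mem_filter.1 hmem).2
    · rcases h01 i (Finset.mem_range.1 hi) with h | h
      · exact h
      · exact absurd (Finset.mem_filter.2 ⟨hi, h⟩) hmem
  have hEA : ∀ A ∈ Finset.powersetCard s (Finset.range t),
      P (E A) = ENNReal.ofReal θ ^ s * ENNReal.ofReal (1-θ) ^ (t - s) := by
    intro A hA'
    obtain ⟨hAsub, hAcard⟩ := Finset.mem_powersetCard.1 hA'
    rw [hE]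
    rw [hYindep.meas_biInter (S := Finset.range t)
      (s := fun i => Y i ⁻¹' {if i ∈ A then (1:ℝ) else 0})
      (fun i _ => ⟨{if i ∈ A then (1:ℝ) else 0}, measurableSet_singleton _, rfl⟩)]
    have hterm : ∀ i, P (Y i ⁻¹' {if i ∈ A then (1:ℝ) else 0})
        = if i ∈ A then ENNReal.ofReal θ else ENNReal.ofReal (1-θ) := by
      intro i
      split_ifs with h
      · rw [law_point P (hYm i) (hYlaw i), bernoulliLaw_one]
      · rw [law_point P (hYm i) (hYlaw i), bernoulliLaw_zero]
    rw [Finset.prod_congr rfl (fun i _ => hterm i), Finset.prod_ite, Finset.prod_const,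
      Finset.prod_const, Finset.filter_mem_eq_inter, Finset.inter_eq_right.2 hAsub,
      Finset.filter_not, Finset.filter_mem_eq_inter, Finset.inter_eq_right.2 hAsub,
      Finset.card_sdiff_of_subset hAsub, Finset.card_range, hAcard]
  have hU : P {ω | (∑ i ∈ Finset.range t, Y i ω) = (s:ℝ)}
      ≤ (t.choose s : ENNReal) * (ENNReal.ofReal θ ^ s * ENNReal.ofReal (1-θ) ^ (t - s)) := by
    refine le_trans (measure_mono_ae hsub) ?_
    refine le_trans (measure_biUnion_finset_le _ _) ?_
    rw [Finset.sum_congr rfl hEA, Finset.sum_const, Finset.card_powersetCard,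
      Finset.card_range, nsmul_eq_mul]
  have hne : (t.choose s : ENNReal) * (ENNReal.ofReal θ ^ s * ENNReal.ofReal (1-θ) ^ (t - s)) ≠ ⊤ :=
    ENNReal.mul_ne_top (ENNReal.natCast_ne_top _)
      (ENNReal.mul_ne_top (ENNReal.pow_ne_top ENNReal.ofReal_ne_top)
        (ENNReal.pow_ne_top ENNReal.ofReal_ne_top))
  have := ENNReal.toReal_mono hne hU
  rw [ENNReal.toReal_mul, ENNReal.toReal_mul, ENNReal.toReal_pow, ENNReal.toReal_pow,
    ENNReal.toReal_ofReal hθ0, ENNReal.toReal_ofReal (by linarith : (0:ℝ) ≤ 1 - θ),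
    ENNReal.toReal_natCast] at this
  linarith

lemma perterm (θ : ℝ) (hθ0 : 0 < θ) (hθ1 : θ < 1) (t s : ℕ) (ht : 1 ≤ t) (hs : s ≤ t)
    (p : ℝ) (hp0 : 0 ≤ p) (hpq : p ≤ t.choose s * θ^s * (1-θ)^(t-s)) :
    (-(s:ℝ) * Real.logb 2 θ - ((t:ℝ)-s) * Real.logb 2 (1-θ) - t * binEnt ((s:ℝ)/t)) * p
      ≤ 2 * (1/(t*((t:ℝ)+1)^2)) + 3 * Real.logb 2 ((t:ℝ)+1) * p := by
  have ht0 : (0:ℝ) < t := by exact_mod_cast ht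
  have hq : (0:ℝ) < t.choose s * θ^s * (1-θ)^(t-s) := by
    have : 0 < t.choose s := Nat.choose_pos hs
    have h1 : (0:ℝ) < t.choose s := by exact_mod_cast this
    have h2 : (0:ℝ) < 1 - θ := by linarith
    positivity
  have hchoose : (0:ℝ) < t.choose s := by exact_mod_cast Nat.choose_pos hs
  set q : ℝ := t.choose s * θ^s * (1-θ)^(t-s) with hqdef
  set r : ℝ := 1/(t*((t:ℝ)+1)^2) with hrdef
  have hr : 0 < r := by rw [hrdef]; positivity
  have hlogt1 : 0 ≤ Real.logb 2 ((t:ℝ)+1) := Real.logb_nonneg one_lt_two (by linarith)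
  have h1θ : (0:ℝ) < 1 - θ := by linarith
  have hcast : ((t - s : ℕ):ℝ) = (t:ℝ) - s := by
    have := Nat.cast_sub hs (R := ℝ); rw [this]
  have key1 : -(s:ℝ) * Real.logb 2 θ - ((t:ℝ)-s) * Real.logb 2 (1-θ)
      = Real.logb 2 (t.choose s) - Real.logb 2 q := by
    rw [hqdef, Real.logb_mul (mul_pos hchoose (pow_pos hθ0 s)).ne' (pow_pos h1θ _).ne',
      Real.logb_mul hchoose.ne' (pow_pos hθ0 s).ne', Real.logb_pow, Real.logb_pow, hcast]
    ring
  have factor : -(s:ℝ) * Real.logb 2 θ - ((t:ℝ)-s) * Real.logb 2 (1-θ) - t * binEnt ((s:ℝ)/t)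
      ≤ -Real.logb 2 q := by
    rw [key1]; linarith [logb_choose_le t s ht hs]
  have h3 : (-Real.logb 2 q) * p ≤ 2 * r + 3 * Real.logb 2 ((t:ℝ)+1) * p := by
    rcases eq_or_lt_of_le hp0 with hp | hp
    · rw [← hp]; simp; positivity
    · have hterm1 : (Real.logb 2 p - Real.logb 2 q) * p ≤ 0 :=
        mul_nonpos_of_nonpos_of_nonneg
          (sub_nonpos.2 (Real.logb_le_logb_of_le one_lt_two hp hpq)) hp0
      have hlog2 : (0.6931471803:ℝ) < Real.log 2 := Real.log_two_gt_d9
      have hrp : (0:ℝ) < r / p := div_pos hr hp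
      have h1 : Real.logb 2 (r/p) ≤ 2 * (r/p) := by
        rw [Real.logb, div_le_iff₀ (by linarith)]
        have := Real.log_le_sub_one_of_pos hrp
        nlinarith
      have hterm2 : (Real.logb 2 r - Real.logb 2 p) * p ≤ 2 * r := by
        rw [← Real.logb_div hr.ne' hp.ne']
        calc Real.logb 2 (r/p) * p ≤ (2*(r/p)) * p := mul_le_mul_of_nonneg_right h1 hp0
        _ = 2 * r := by field_simp
      have hterm3 : -Real.logb 2 r ≤ 3 * Real.logb 2 ((t:ℝ)+1) := by
        rw [hrdef, one_div, Real.logb_inv, neg_neg,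
          Real.logb_mul (by positivity) (by positivity), Real.logb_pow]
        have : Real.logb 2 (t:ℝ) ≤ Real.logb 2 ((t:ℝ)+1) :=
          Real.logb_le_logb_of_le one_lt_two ht0 (by linarith)
        push_cast
        linarith
      have hterm3' : (-Real.logb 2 r) * p ≤ (3 * Real.logb 2 ((t:ℝ)+1)) * p :=
        mul_le_mul_of_nonneg_right hterm3 hp0
      have hsplit : (-Real.logb 2 q) * p
          = (Real.logb 2 p - Real.logb 2 q) * p + (Real.logb 2 r - Real.logb 2 p) * p
            + (-Real.logb 2 r) * p := by ring
      rw [hsplit]; linarith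
  calc (-(s:ℝ) * Real.logb 2 θ - ((t:ℝ)-s) * Real.logb 2 (1-θ) - t * binEnt ((s:ℝ)/t)) * p
      ≤ (-Real.logb 2 q) * p := mul_le_mul_of_nonneg_right factor hp0
  _ ≤ 2 * r + 3 * Real.logb 2 ((t:ℝ)+1) * p := h3

lemma wald {Ω : Type} [mΩ : MeasurableSpace Ω] (P : Measure Ω) [IsProbabilityMeasure P]
    {θ : ℝ} (hθ0 : 0 ≤ θ) (hθ1 : θ ≤ 1) {Y : ℕ → Ω → ℝ} (hYm : ∀ i, Measurable (Y i))
    (hYindep : iIndepFun Y P)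
    (hYlaw : ∀ i, P.map (Y i) = bernoulliLaw θ)
    (n : ℕ) (T : Ω → ℕ) (hTn : ∀ ω, T ω ≤ n)
    (hTstop : ∀ t : ℕ,
      MeasurableSet[⨆ i ∈ Finset.range t, MeasurableSpace.comap (Y i) inferInstance]
        {ω | T ω = t}) :
    ∫ ω, (∑ i ∈ Finset.range (T ω), Y i ω) ∂P = θ * ∫ ω, (T ω : ℝ) ∂P := by
  set 𝒢 : ℕ → MeasurableSpace Ω :=
    fun t => ⨆ i ∈ Finset.range t, MeasurableSpace.comap (Y i) inferInstance with h𝒢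
  have hGle : ∀ t, 𝒢 t ≤ mΩ := fun t => iSup₂_le fun i _ => (hYm i).comap_le
  set B : ℕ → Set Ω := fun i => {ω | i < T ω} with hB
  have hBsub : ∀ i, MeasurableSet[𝒢 i] (B i) := by
    intro i
    have hmono : ∀ t, t ≤ i → 𝒢 t ≤ 𝒢 i := by
      intro t ht
      exact biSup_mono (fun j hj => Finset.mem_range.2
        (lt_of_lt_of_le (Finset.mem_range.1 hj) ht))
    have hBeq : B i = (⋃ t ∈ Finset.range (i+1), {ω | T ω = t})ᶜ := by
      ext ω
      simp only [hB, Set.mem_setOf_eq, Set.mem_compl_iff, Set.mem_iUnion, Finset.mem_range,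
        Nat.lt_succ_iff, exists_prop, not_exists, not_and]
      constructor
      · intro h t hti hTt; omega
      · intro h; by_contra hc; exact h (T ω) (by omega) rfl
    rw [hBeq]
    exact (MeasurableSet.biUnion (Finset.range (i+1)).countable_toSet
      (fun t ht => hmono t (by simpa [Nat.lt_succ_iff] using ht) _ (hTstop t))).compl
  have hind : ∀ i, Indep (𝒢 i) (MeasurableSpace.comap (Y i) inferInstance) P := by
    intro i
    have hdisj : Disjoint {j : ℕ | j < i} {i} := by
      simp only [Set.disjoint_left, Set.mem_setOf_eq, Set.mem_singleton_iff]
      omega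
    have h := indep_iSup_of_disjoint
      (m := fun j => MeasurableSpace.comap (Y j) inferInstance)
      (fun j => (hYm j).comap_le) hYindep.iIndep hdisj
    have e1 : (⨆ j ∈ {j : ℕ | j < i}, MeasurableSpace.comap (Y j) inferInstance) = 𝒢 i := by
      rw [h𝒢]
      simp only [Finset.mem_range, Set.mem_setOf_eq]
    have e2 : (⨆ j ∈ ({i} : Set ℕ), MeasurableSpace.comap (Y j) inferInstance)
        = MeasurableSpace.comap (Y i) inferInstance := by
      simp
    rwa [e1, e2] at h
  -- events
  set E1 : ℕ → Set Ω := fun i => Y i ⁻¹' {1} with hE1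
  have hE1meas : ∀ i, MeasurableSet[MeasurableSpace.comap (Y i) inferInstance] (E1 i) :=
    fun i => ⟨{1}, measurableSet_singleton 1, rfl⟩
  have hBE : ∀ i, P (B i ∩ E1 i) = P (B i) * P (E1 i) := by
    intro i
    exact ((Indep_iff _ _ _).1 (hind i)) (B i) (E1 i) (hBsub i) (hE1meas i)
  set χ : ℕ → Ω → ℝ := fun i => (B i).indicator (fun _ => (1:ℝ)) with hχ
  have hBmeas : ∀ i, MeasurableSet (B i) := fun i => hGle i _ (hBsub i)
  have hχI : ∀ i, Integrable (χ i) P := fun i => (integrable_const 1).indicator (hBmeas i)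
  have hχint : ∀ i, ∫ ω, χ i ω ∂P = (P (B i)).toReal := by
    intro i
    rw [hχ]
    rw [integral_indicator_const (1:ℝ) (hBmeas i), smul_eq_mul, mul_one, measureReal_def]
  have hprod : ∀ i, (fun ω => Y i ω * χ i ω)
      =ᵐ[P] (E1 i ∩ B i).indicator (fun _ => (1:ℝ)) := by
    intro i
    filter_upwards [ae01 P hθ0 hθ1 (hYm i) (hYlaw i)] with ω h01
    by_cases hBmem : ω ∈ B i
    · have hχ1 : χ i ω = 1 := Set.indicator_of_mem hBmem _
      rcases h01 with h0 | h1
      · have hnot : ω ∉ E1 i ∩ B i := by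
          rintro ⟨hmem, -⟩
          have : Y i ω = 1 := hmem
          rw [h0] at this; norm_num at this
        rw [hχ1, h0, Set.indicator_of_notMem hnot]; ring
      · have hmem : ω ∈ E1 i ∩ B i := ⟨by exact h1, hBmem⟩
        rw [hχ1, h1, Set.indicator_of_mem hmem]; ring
    · have hχ0 : χ i ω = 0 := Set.indicator_of_notMem hBmem _
      rw [hχ0, Set.indicator_of_notMem (fun hmem => hBmem hmem.2)]; ring
  have hmeasE1B : ∀ i, MeasurableSet (E1 i ∩ B i) :=
    fun i => ((hYm i) (measurableSet_singleton 1)).inter (hBmeas i)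
  have hmulI : ∀ i, Integrable (fun ω => Y i ω * χ i ω) P := fun i =>
    ((integrable_const (1:ℝ)).indicator (hmeasE1B i)).congr (hprod i).symm
  have hmulint : ∀ i, ∫ ω, Y i ω * χ i ω ∂P = θ * (P (B i)).toReal := by
    intro i
    rw [integral_congr_ae (hprod i), integral_indicator_const (1:ℝ) (hmeasE1B i),
      smul_eq_mul, mul_one, measureReal_def, Set.inter_comm, hBE i, ENNReal.toReal_mul,
      law_point P (hYm i) (hYlaw i), bernoulliLaw_one, ENNReal.toReal_ofReal hθ0]
    ring
  have hSrep : ∀ ω, (∑ i ∈ Finset.range (T ω), Y i ω)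
      = ∑ i ∈ Finset.range n, Y i ω * χ i ω := by
    intro ω
    calc (∑ i ∈ Finset.range (T ω), Y i ω)
        = ∑ i ∈ Finset.range (T ω), Y i ω * χ i ω := by
          refine Finset.sum_congr rfl fun i hi => ?_
          show Y i ω = Y i ω * (B i).indicator (fun _ => (1:ℝ)) ω
          have hmem : ω ∈ B i := Finset.mem_range.1 hi
          rw [Set.indicator_of_mem hmem, mul_one]
      _ = ∑ i ∈ Finset.range n, Y i ω * χ i ω := by
          refine Finset.sum_subset (Finset.range_subset_range.2 (hTn ω)) fun i _ hi => ?_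
          have : ω ∉ B i := fun hc => hi (Finset.mem_range.2 hc)
          show Y i ω * (B i).indicator (fun _ => (1:ℝ)) ω = 0
          rw [Set.indicator_of_notMem this, mul_zero]
  have hTrep : ∀ ω, (T ω : ℝ) = ∑ i ∈ Finset.range n, χ i ω := by
    intro ω
    calc (T ω : ℝ) = ∑ i ∈ Finset.range (T ω), (1:ℝ) := by simp
      _ = ∑ i ∈ Finset.range (T ω), χ i ω := by
          refine Finset.sum_congr rfl fun i hi => ?_
          show (1:ℝ) = (B i).indicator (fun _ => (1:ℝ)) ω
          have hmem : ω ∈ B i := Finset.mem_range.1 hi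
          rw [Set.indicator_of_mem hmem]
      _ = ∑ i ∈ Finset.range n, χ i ω := by
          refine Finset.sum_subset (Finset.range_subset_range.2 (hTn ω)) fun i _ hi => ?_
          have : ω ∉ B i := fun hc => hi (Finset.mem_range.2 hc)
          show (B i).indicator (fun _ => (1:ℝ)) ω = 0
          rw [Set.indicator_of_notMem this]
  calc ∫ ω, (∑ i ∈ Finset.range (T ω), Y i ω) ∂P
      = ∫ ω, ∑ i ∈ Finset.range n, Y i ω * χ i ω ∂P :=
        integral_congr_ae (Filter.Eventually.of_forall fun ω => hSrep ω)
    _ = ∑ i ∈ Finset.range n, ∫ ω, Y i ω * χ i ω ∂P :=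
        integral_finset_sum _ (fun i _ => hmulI i)
    _ = ∑ i ∈ Finset.range n, θ * (P (B i)).toReal :=
        Finset.sum_congr rfl fun i _ => hmulint i
    _ = θ * ∑ i ∈ Finset.range n, ∫ ω, χ i ω ∂P := by
        rw [Finset.mul_sum]
        exact Finset.sum_congr rfl fun i _ => by rw [hχint i]
    _ = θ * ∫ ω, ∑ i ∈ Finset.range n, χ i ω ∂P := by
        rw [integral_finset_sum _ (fun i _ => hχI i)]
    _ = θ * ∫ ω, (T ω : ℝ) ∂P := by
        congr 1
        exact integral_congr_ae (Filter.Eventually.of_forall fun ω => (hTrep ω).symm)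

theorem stmt12 :
    ∃ C : ℝ, ∀ (Ω : Type) (_ : MeasurableSpace Ω) (P : Measure Ω),
      IsProbabilityMeasure P →
      ∀ θ : ℝ, θ ∈ Set.Icc (0:ℝ) 1 →
      -- `Y i` is the `(i+1)`-st coin flip, so `Y 0, Y 1, …` play the roles of `Y_1, Y_2, …`
      ∀ Y : ℕ → Ω → ℝ, (∀ i, Measurable (Y i)) →
      iIndepFun Y P →
      (∀ i, P.map (Y i) = bernoulliLaw θ) →
      ∀ n : ℕ, 1 ≤ n →
      ∀ T : Ω → ℕ, (∀ ω, 1 ≤ T ω) → (∀ ω, T ω ≤ n) →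
      -- `T` is a stopping time for the natural filtration `σ(Y_1, …, Y_t)`
      (∀ t : ℕ,
        MeasurableSet[⨆ i ∈ Finset.range t, MeasurableSpace.comap (Y i) inferInstance]
          {ω | T ω = t}) →
      ∫ ω, (T ω : ℝ) *
          (binEnt θ - binEnt ((∑ i ∈ Finset.range (T ω), Y i ω) / (T ω : ℝ))) ∂P
        ≤ C * ∫ ω, Real.logb 2 ((T ω : ℝ) + 1) ∂P := by
  refine ⟨5, ?_⟩
  intro Ω mΩ P hP θ hθ Y hYm hYindep hYlaw n hn T hT1 hTn hTstop
  haveI := hP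
  obtain ⟨hθ0, hθ1⟩ := hθ
  have hGle : ∀ t, (⨆ i ∈ Finset.range t, MeasurableSpace.comap (Y i) inferInstance) ≤ mΩ :=
    fun t => iSup₂_le fun i _ => (hYm i).comap_le
  have hTset : ∀ t, MeasurableSet {ω | T ω = t} := fun t => hGle t _ (hTstop t)
  have hRHSnonneg : 0 ≤ ∫ ω, Real.logb 2 ((T ω : ℝ) + 1) ∂P := by
    refine integral_nonneg fun ω => Real.logb_nonneg one_lt_two ?_
    have : (0:ℝ) ≤ (T ω : ℝ) := Nat.cast_nonneg _
    linarith
  -- the θ = 0 and θ = 1 degenerate cases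
  rcases eq_or_lt_of_le hθ0 with hθeq | hθpos
  · -- θ = 0
    have haez : ∀ᵐ ω ∂P, ∀ i, i < n → Y i ω = 0 := by
      rw [ae_all_iff]
      intro i
      have h1 : P (Y i ⁻¹' {(0:ℝ)}) = 1 := by
        rw [law_point P (hYm i) (hYlaw i), bernoulliLaw_zero, ← hθeq]
        norm_num
      have hc : P ((Y i ⁻¹' {(0:ℝ)})ᶜ) = 0 := by
        rw [measure_compl ((hYm i) (measurableSet_singleton 0)) (measure_ne_top P _),
          measure_univ, h1, tsub_self]
      rw [ae_iff]
      refine measure_mono_null (fun ω hω => ?_) hc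
      simp only [Set.mem_setOf_eq, Classical.not_imp] at hω
      exact hω.2
    have hLHS0 : ∫ ω, (T ω : ℝ) *
        (binEnt θ - binEnt ((∑ i ∈ Finset.range (T ω), Y i ω) / (T ω : ℝ))) ∂P = 0 := by
      refine integral_eq_zero_of_ae ?_
      filter_upwards [haez] with ω h0
      have hsum0 : (∑ i ∈ Finset.range (T ω), Y i ω) = 0 :=
        Finset.sum_eq_zero fun i hi => h0 i (lt_of_lt_of_le (Finset.mem_range.1 hi) (hTn ω))
      rw [hsum0, ← hθeq, zero_div, binEnt_zero]
      simp
    rw [hLHS0]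
    linarith
  rcases eq_or_lt_of_le hθ1 with hθeq1 | hθlt
  · -- θ = 1
    have haez : ∀ᵐ ω ∂P, ∀ i, i < n → Y i ω = 1 := by
      rw [ae_all_iff]
      intro i
      have h1 : P (Y i ⁻¹' {(1:ℝ)}) = 1 := by
        rw [law_point P (hYm i) (hYlaw i), bernoulliLaw_one, hθeq1]
        norm_num
      have hc : P ((Y i ⁻¹' {(1:ℝ)})ᶜ) = 0 := by
        rw [measure_compl ((hYm i) (measurableSet_singleton 1)) (measure_ne_top P _),
          measure_univ, h1, tsub_self]
      rw [ae_iff]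
      refine measure_mono_null (fun ω hω => ?_) hc
      simp only [Set.mem_setOf_eq, Classical.not_imp] at hω
      exact hω.2
    have hLHS0 : ∫ ω, (T ω : ℝ) *
        (binEnt θ - binEnt ((∑ i ∈ Finset.range (T ω), Y i ω) / (T ω : ℝ))) ∂P = 0 := by
      refine integral_eq_zero_of_ae ?_
      filter_upwards [haez] with ω h0
      have hT0 : (0:ℝ) < (T ω : ℝ) := by exact_mod_cast hT1 ω
      have hsum1 : (∑ i ∈ Finset.range (T ω), Y i ω) = (T ω : ℝ) := by
        rw [Finset.sum_congr rfl
          (fun i hi => h0 i (lt_of_lt_of_le (Finset.mem_range.1 hi) (hTn ω)))]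
        simp
      rw [hsum1, div_self hT0.ne', hθeq1, binEnt_one]
      simp
    rw [hLHS0]
    linarith
  -- main case : 0 < θ < 1
  set A : ℕ → ℕ → Set Ω := fun t s =>
    {ω | T ω = t ∧ (∑ i ∈ Finset.range t, Y i ω) = (s:ℝ)} with hA
  have hAmeas : ∀ t s, MeasurableSet (A t s) := by
    intro t s
    exact (hTset t).inter
      ((Finset.measurable_sum (Finset.range t) (fun i _ => hYm i))
        (measurableSet_singleton ((s:ℝ))))
  have hdisj : ∀ t s t' s', (t ≠ t' ∨ s ≠ s') → ∀ ω, ω ∈ A t s → ω ∉ A t' s' := by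
    rintro t s t' s' h ω ⟨h1, h2⟩ ⟨h1', h2'⟩
    have ht : t = t' := h1.symm.trans h1'
    subst ht
    rcases h with h | h
    · exact h rfl
    · refine h ?_
      have : (s:ℝ) = (s':ℝ) := h2.symm.trans h2'
      exact_mod_cast this
  have hcov : ∀ᵐ ω ∂P, ∃ t, t ∈ Finset.Icc 1 n ∧ ∃ s, s ∈ Finset.range (t+1) ∧ ω ∈ A t s := by
    have hae : ∀ᵐ ω ∂P, ∀ i, i < n → (Y i ω = 0 ∨ Y i ω = 1) := by
      rw [ae_all_iff]
      intro i
      filter_upwards [ae01 P hθ0 hθ1 (hYm i) (hYlaw i)] with ω h _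
      exact h
    filter_upwards [hae] with ω h01
    obtain ⟨s, hs, hsum⟩ := sum01 Y ω (T ω) (fun i hi => h01 i (lt_of_lt_of_le hi (hTn ω)))
    exact ⟨T ω, Finset.mem_Icc.2 ⟨hT1 ω, hTn ω⟩, s,
      Finset.mem_range.2 (Nat.lt_succ_of_le hs), rfl, hsum⟩
  have hrep : ∀ (f : Ω → ℝ) (F : ℕ → ℕ → ℝ),
      (∀ t ∈ Finset.Icc 1 n, ∀ s ∈ Finset.range (t+1), ∀ ω ∈ A t s, f ω = F t s) →
      ∫ ω, f ω ∂P
        = ∑ t ∈ Finset.Icc 1 n, ∑ s ∈ Finset.range (t+1), F t s * (P (A t s)).toReal :=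
    fun f F hf => rep_lemma P n A hAmeas hdisj hcov f F hf
  set p : ℕ → ℕ → ℝ := fun t s => (P (A t s)).toReal with hpdef
  have hLHS : ∫ ω, (T ω : ℝ) *
      (binEnt θ - binEnt ((∑ i ∈ Finset.range (T ω), Y i ω) / (T ω : ℝ))) ∂P
      = ∑ t ∈ Finset.Icc 1 n, ∑ s ∈ Finset.range (t+1),
          ((t:ℝ) * (binEnt θ - binEnt ((s:ℝ)/(t:ℝ)))) * p t s := by
    refine hrep _ _ ?_
    rintro t ht s hs ω ⟨h1, h2⟩
    rw [h1, h2]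
  have hRHS : ∫ ω, Real.logb 2 ((T ω : ℝ) + 1) ∂P
      = ∑ t ∈ Finset.Icc 1 n, ∑ s ∈ Finset.range (t+1),
          Real.logb 2 ((t:ℝ) + 1) * p t s := by
    refine hrep _ _ ?_
    rintro t ht s hs ω ⟨h1, h2⟩
    rw [h1]
  have hES : ∫ ω, (∑ i ∈ Finset.range (T ω), Y i ω) ∂P
      = ∑ t ∈ Finset.Icc 1 n, ∑ s ∈ Finset.range (t+1), (s:ℝ) * p t s := by
    refine hrep _ _ ?_
    rintro t ht s hs ω ⟨h1, h2⟩
    rw [h1, h2]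
  have hET : ∫ ω, (T ω : ℝ) ∂P
      = ∑ t ∈ Finset.Icc 1 n, ∑ s ∈ Finset.range (t+1), (t:ℝ) * p t s := by
    refine hrep _ _ ?_
    rintro t ht s hs ω ⟨h1, h2⟩
    rw [h1]
  have hONE : (1:ℝ)
      = ∑ t ∈ Finset.Icc 1 n, ∑ s ∈ Finset.range (t+1), 1 * p t s := by
    have := hrep (fun _ => (1:ℝ)) (fun _ _ => 1) (fun _ _ _ _ _ _ => rfl)
    rwa [integral_const, probReal_univ, one_smul] at this
  -- Wald at sum level
  have hwald := wald P hθ0 hθ1 hYm hYindep hYlaw n T hTn hTstop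
  have hsum_wald : (∑ t ∈ Finset.Icc 1 n, ∑ s ∈ Finset.range (t+1), (s:ℝ) * p t s)
      = θ * ∑ t ∈ Finset.Icc 1 n, ∑ s ∈ Finset.range (t+1), (t:ℝ) * p t s := by
    rw [← hES, ← hET]; exact hwald
  -- abbreviations
  set Et : ℝ := ∑ t ∈ Finset.Icc 1 n, ∑ s ∈ Finset.range (t+1), (t:ℝ) * p t s with hEt
  set Es : ℝ := ∑ t ∈ Finset.Icc 1 n, ∑ s ∈ Finset.range (t+1), (s:ℝ) * p t s with hEs
  set S2 : ℝ := ∑ t ∈ Finset.Icc 1 n, ∑ s ∈ Finset.range (t+1),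
      ((t:ℝ) * binEnt ((s:ℝ)/(t:ℝ))) * p t s with hS2
  -- rewrite the LHS sum
  have e1 : (∑ t ∈ Finset.Icc 1 n, ∑ s ∈ Finset.range (t+1),
      ((t:ℝ) * (binEnt θ - binEnt ((s:ℝ)/(t:ℝ)))) * p t s) = binEnt θ * Et - S2 := by
    rw [hEt, hS2, Finset.mul_sum, ← Finset.sum_sub_distrib]
    refine Finset.sum_congr rfl fun t _ => ?_
    rw [Finset.mul_sum, ← Finset.sum_sub_distrib]
    refine Finset.sum_congr rfl fun s _ => ?_
    ring
  have e4 : (∑ t ∈ Finset.Icc 1 n, ∑ s ∈ Finset.range (t+1),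
      (-(s:ℝ) * Real.logb 2 θ - ((t:ℝ)-(s:ℝ)) * Real.logb 2 (1-θ)
        - (t:ℝ) * binEnt ((s:ℝ)/(t:ℝ))) * p t s)
      = (-Real.logb 2 θ) * Es + (-Real.logb 2 (1-θ)) * Et + Real.logb 2 (1-θ) * Es - S2 := by
    rw [hEt, hEs, hS2, Finset.mul_sum, Finset.mul_sum, Finset.mul_sum,
      ← Finset.sum_add_distrib, ← Finset.sum_add_distrib, ← Finset.sum_sub_distrib]
    refine Finset.sum_congr rfl fun t _ => ?_
    rw [Finset.mul_sum, Finset.mul_sum, Finset.mul_sum,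
      ← Finset.sum_add_distrib, ← Finset.sum_add_distrib, ← Finset.sum_sub_distrib]
    refine Finset.sum_congr rfl fun s _ => ?_
    ring
  have eS14 : (∑ t ∈ Finset.Icc 1 n, ∑ s ∈ Finset.range (t+1),
      ((t:ℝ) * (binEnt θ - binEnt ((s:ℝ)/(t:ℝ)))) * p t s)
      = (∑ t ∈ Finset.Icc 1 n, ∑ s ∈ Finset.range (t+1),
      (-(s:ℝ) * Real.logb 2 θ - ((t:ℝ)-(s:ℝ)) * Real.logb 2 (1-θ)
        - (t:ℝ) * binEnt ((s:ℝ)/(t:ℝ))) * p t s) := by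
    rw [e1, e4]
    have hEsEt : Es = θ * Et := hsum_wald
    rw [hEsEt]
    simp only [binEnt]
    ring
  -- per-term bounds
  have hp0 : ∀ t s, 0 ≤ p t s := fun t s => ENNReal.toReal_nonneg
  have hpq : ∀ t s, p t s ≤ (t.choose s : ℝ) * θ^s * (1-θ)^(t-s) := by
    intro t s
    refine le_trans ?_ (binom_bound P hθ0 hθ1 hYm hYindep hYlaw t s)
    refine ENNReal.toReal_mono (measure_ne_top P _) (measure_mono ?_)
    rintro ω ⟨h1, h2⟩
    exact h2
  have hsum_bound : (∑ t ∈ Finset.Icc 1 n, ∑ s ∈ Finset.range (t+1),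
      (-(s:ℝ) * Real.logb 2 θ - ((t:ℝ)-(s:ℝ)) * Real.logb 2 (1-θ)
        - (t:ℝ) * binEnt ((s:ℝ)/(t:ℝ))) * p t s)
      ≤ ∑ t ∈ Finset.Icc 1 n, ∑ s ∈ Finset.range (t+1),
          (2 * (1/((t:ℝ)*((t:ℝ)+1)^2)) + 3 * Real.logb 2 ((t:ℝ)+1) * p t s) := by
    refine Finset.sum_le_sum fun t ht => Finset.sum_le_sum fun s hs => ?_
    exact perterm θ hθpos hθlt t s (Finset.mem_Icc.1 ht).1
      (Nat.lt_succ_iff.1 (Finset.mem_range.1 hs)) (p t s) (hp0 t s) (hpq t s)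
  have hsplit : (∑ t ∈ Finset.Icc 1 n, ∑ s ∈ Finset.range (t+1),
      (2 * (1/((t:ℝ)*((t:ℝ)+1)^2)) + 3 * Real.logb 2 ((t:ℝ)+1) * p t s))
      ≤ 2 + 3 * ∑ t ∈ Finset.Icc 1 n, ∑ s ∈ Finset.range (t+1),
          Real.logb 2 ((t:ℝ)+1) * p t s := by
    have hsum_r : (∑ t ∈ Finset.Icc 1 n, ∑ s ∈ Finset.range (t+1),
        2 * (1/((t:ℝ)*((t:ℝ)+1)^2))) ≤ 2 := by
      have heq : ∀ t ∈ Finset.Icc 1 n, (∑ _s ∈ Finset.range (t+1),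
          2 * (1/((t:ℝ)*((t:ℝ)+1)^2))) = 2 * (1/((t:ℝ)*((t:ℝ)+1))) := by
        intro t ht
        have ht1 : 1 ≤ t := (Finset.mem_Icc.1 ht).1
        have ht0 : (0:ℝ) < t := by exact_mod_cast ht1
        rw [Finset.sum_const, Finset.card_range, nsmul_eq_mul]
        have htp : (0:ℝ) < (t:ℝ) + 1 := by linarith
        push_cast
        field_simp
      rw [Finset.sum_congr rfl heq, ← Finset.mul_sum]
      have := sum_inv_eq n
      have hn1 : (0:ℝ) < (n:ℝ) + 1 := by positivity
      have hle : (∑ t ∈ Finset.Icc 1 n, (1:ℝ)/((t:ℝ)*((t:ℝ)+1))) ≤ 1 := by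
        rw [this]
        have : 0 < 1/((n:ℝ)+1) := by positivity
        linarith
      nlinarith [hle]
    calc (∑ t ∈ Finset.Icc 1 n, ∑ s ∈ Finset.range (t+1),
        (2 * (1/((t:ℝ)*((t:ℝ)+1)^2)) + 3 * Real.logb 2 ((t:ℝ)+1) * p t s))
        = (∑ t ∈ Finset.Icc 1 n, ∑ s ∈ Finset.range (t+1),
            2 * (1/((t:ℝ)*((t:ℝ)+1)^2)))
          + ∑ t ∈ Finset.Icc 1 n, ∑ s ∈ Finset.range (t+1),
            3 * Real.logb 2 ((t:ℝ)+1) * p t s := by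
          rw [← Finset.sum_add_distrib]
          refine Finset.sum_congr rfl fun t _ => ?_
          rw [← Finset.sum_add_distrib]
      _ ≤ 2 + 3 * ∑ t ∈ Finset.Icc 1 n, ∑ s ∈ Finset.range (t+1),
            Real.logb 2 ((t:ℝ)+1) * p t s := by
          have e : (∑ t ∈ Finset.Icc 1 n, ∑ s ∈ Finset.range (t+1),
              3 * Real.logb 2 ((t:ℝ)+1) * p t s)
              = 3 * ∑ t ∈ Finset.Icc 1 n, ∑ s ∈ Finset.range (t+1),
                  Real.logb 2 ((t:ℝ)+1) * p t s := by
            rw [Finset.mul_sum]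
            refine Finset.sum_congr rfl fun t _ => ?_
            rw [Finset.mul_sum]
            refine Finset.sum_congr rfl fun s _ => ?_
            ring
          rw [e]
          linarith [hsum_r]
  have hRHSge1 : (1:ℝ) ≤ ∑ t ∈ Finset.Icc 1 n, ∑ s ∈ Finset.range (t+1),
      Real.logb 2 ((t:ℝ)+1) * p t s := by
    refine le_trans (le_of_eq hONE) ?_
    refine Finset.sum_le_sum fun t ht => Finset.sum_le_sum fun s hs => ?_
    have ht1 : 1 ≤ t := (Finset.mem_Icc.1 ht).1
    have ht0 : (1:ℝ) ≤ t := by exact_mod_cast ht1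
    have hlog : (1:ℝ) ≤ Real.logb 2 ((t:ℝ)+1) := by
      have h2 : Real.logb 2 2 = 1 := Real.logb_self_eq_one one_lt_two
      rw [← h2]
      exact Real.logb_le_logb_of_le one_lt_two (by norm_num) (by linarith)
    exact mul_le_mul_of_nonneg_right hlog (hp0 t s)
  rw [hLHS, hRHS]
  have := eS14
  linarith [hsum_bound, hsplit, hRHSge1, eS14]
end

section
/- For each n ≥ 1 let p_n be a probability mass function on the set {0,1}ⁿ of binary strings of length n, let X_n be a random variable with law p_n, and set L_n := (1/n)·log₂(1/p_n(X_n)). Then the family {L_n : n ≥ 1} is uniformly integrable; in particular, lim_{K→∞} sup_n E[L_n·1{L_n > K}] = 0. -/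
open Filter

lemma term_bound (n : ℕ) (hn : 1 ≤ n) (K : ℝ) (hK : 0 ≤ K) (q : ℝ) (hq : 0 ≤ q) :
    q * ((1 / (n : ℝ)) * Real.logb 2 (1 / q)) *
      (if K < (1 / (n : ℝ)) * Real.logb 2 (1 / q) then 1 else 0)
      ≤ 3 * (2 : ℝ) ^ (-((n : ℝ) * K) / 2) := by
  have hpow : (0:ℝ) < (2 : ℝ) ^ (-((n : ℝ) * K) / 2) := Real.rpow_pos_of_pos two_pos _
  split_ifs with h
  · rcases eq_or_lt_of_le hq with rfl | hq0
    · simp; positivity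
    · have hn0 : (0:ℝ) < (n : ℝ) := by exact_mod_cast hn
      have h1n : (1:ℝ)/(n:ℝ) ≤ 1 := by
        rw [div_le_one hn0]; exact_mod_cast hn
      have hL : (n : ℝ) * K < Real.logb 2 (1 / q) := by
        have := (mul_lt_mul_iff_right₀ hn0).mpr h
        rwa [← mul_assoc, mul_one_div, div_self hn0.ne', one_mul] at this
      have hLK : (0:ℝ) ≤ (n:ℝ) * K := by positivity
      have hlogb : 0 ≤ Real.logb 2 (1 / q) := le_trans hLK hL.le
      have h1 : (2:ℝ) ^ ((n:ℝ)*K) < 1 / q :=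
        (Real.lt_logb_iff_rpow_lt one_lt_two (by positivity)).mp hL
      have hqlt : q < (2 : ℝ) ^ (-((n:ℝ) * K)) := by
        rw [Real.rpow_neg (by norm_num), lt_inv_comm₀ hq0 (by positivity)]
        rwa [one_div] at h1
      have hs : 0 < Real.sqrt q := Real.sqrt_pos.mpr hq0
      -- step 1: drop 1/n
      have step1 : q * ((1/(n:ℝ)) * Real.logb 2 (1/q)) * 1 ≤ q * Real.logb 2 (1/q) := by
        rw [mul_one]
        nlinarith [mul_nonneg hq (mul_nonneg (by positivity : (0:ℝ) ≤ 1/(n:ℝ)) hlogb),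
          mul_nonneg hq hlogb]
      -- step 2: q * logb 2 (1/q) ≤ 3 * sqrt q
      have hlog : Real.log (1/q) ≤ 2 / Real.sqrt q := by
        have h2 := Real.log_le_sub_one_of_pos (inv_pos.mpr hs)
        rw [Real.log_inv, Real.log_sqrt hq] at h2
        rw [one_div, Real.log_inv]
        have : (Real.sqrt q)⁻¹ = 1 / Real.sqrt q := (one_div _).symm
        rw [this] at h2
        have e : 2 / Real.sqrt q = 2 * (1 / Real.sqrt q) := by ring
        linarith
      have hlog2 : (0.6931471803 : ℝ) < Real.log 2 := Real.log_two_gt_d9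
      have step2 : q * Real.logb 2 (1/q) ≤ 3 * Real.sqrt q := by
        have e1 : q * Real.logb 2 (1/q) = (q * Real.log (1/q)) / Real.log 2 := by
          rw [Real.logb]; ring
        rw [e1, div_le_iff₀ (by linarith)]
        have h3 : q * Real.log (1/q) ≤ q * (2 / Real.sqrt q) :=
          mul_le_mul_of_nonneg_left hlog hq
        have h4 : q * (2 / Real.sqrt q) = 2 * Real.sqrt q := by
          rw [mul_div_assoc', mul_comm q 2, mul_div_assoc, Real.div_sqrt]
        nlinarith [hs, h3, h4]
      -- step 3: sqrt q ≤ 2 ^ (-(nK)/2)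
      have step3 : Real.sqrt q ≤ (2:ℝ) ^ (-((n:ℝ)*K)/2) := by
        have hsq : Real.sqrt ((2:ℝ) ^ (-((n:ℝ)*K))) = (2:ℝ) ^ (-((n:ℝ)*K)/2) := by
          rw [Real.sqrt_eq_rpow, ← Real.rpow_mul (by norm_num)]
          ring_nf
        calc Real.sqrt q ≤ Real.sqrt ((2:ℝ) ^ (-((n:ℝ)*K))) := Real.sqrt_le_sqrt hqlt.le
          _ = _ := hsq
      calc q * ((1/(n:ℝ)) * Real.logb 2 (1/q)) * 1 ≤ q * Real.logb 2 (1/q) := step1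
        _ ≤ 3 * Real.sqrt q := step2
        _ ≤ 3 * (2:ℝ) ^ (-((n:ℝ)*K)/2) := by linarith
  · simp only [mul_zero]
    positivity

lemma sum_bound (n : ℕ) (hn : 1 ≤ n) (K : ℝ) (hK : 2 ≤ K) (p : (Fin n → Bool) → ℝ)
    (hp : ∀ x, 0 ≤ p x) :
    ∑ x, p x * ((1 / (n : ℝ)) * Real.logb 2 (1 / p x)) *
      (if K < (1 / (n : ℝ)) * Real.logb 2 (1 / p x) then 1 else 0)
      ≤ 3 * (2:ℝ) ^ (1 - K/2) := by
  have hK0 : (0:ℝ) ≤ K := by linarith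
  have hcard : (Fintype.card (Fin n → Bool) : ℝ) = (2:ℝ) ^ ((n:ℝ)) := by
    simp [Fintype.card_fun]
  calc ∑ x, p x * ((1 / (n : ℝ)) * Real.logb 2 (1 / p x)) *
        (if K < (1 / (n : ℝ)) * Real.logb 2 (1 / p x) then 1 else 0)
      ≤ ∑ _x : Fin n → Bool, 3 * (2:ℝ) ^ (-((n:ℝ) * K) / 2) :=
        Finset.sum_le_sum (fun x _ => term_bound n hn K hK0 (p x) (hp x))
    _ = (Fintype.card (Fin n → Bool) : ℝ) * (3 * (2:ℝ) ^ (-((n:ℝ) * K) / 2)) := by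
        rw [Finset.sum_const, nsmul_eq_mul, Finset.card_univ]
    _ = 3 * ((2:ℝ) ^ ((n:ℝ)) * (2:ℝ) ^ (-((n:ℝ) * K) / 2)) := by rw [hcard]; ring
    _ = 3 * (2:ℝ) ^ ((n:ℝ) * (1 - K/2)) := by
        rw [← Real.rpow_add two_pos]; ring_nf
    _ ≤ 3 * (2:ℝ) ^ (1 - K/2) := by
        have hn1 : (1:ℝ) ≤ (n:ℝ) := by exact_mod_cast hn
        have : (n:ℝ) * (1 - K/2) ≤ 1 - K/2 := by nlinarith
        have := Real.rpow_le_rpow_of_exponent_le one_le_two this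
        linarith

theorem stmt15 (p : ∀ n : ℕ, (Fin n → Bool) → ℝ)
    (hp : ∀ n x, 0 ≤ p n x) (hsum : ∀ n : ℕ, 1 ≤ n → ∑ x, p n x = 1) :
    -- `lim_{K → ∞} sup_{n ≥ 1} E[L_n · 1{L_n > K}] = 0`, where
    -- `L_n = (1/n) log₂ (1/p_n(X_n))` with `X_n ~ p_n`.
    Tendsto (fun K : ℝ => ⨆ n : {m : ℕ // 1 ≤ m},
        ∑ x, p n x * ((1 / ((n : ℕ) : ℝ)) * Real.logb 2 (1 / p n x)) *
          (if K < (1 / ((n : ℕ) : ℝ)) * Real.logb 2 (1 / p n x) then 1 else 0))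
      atTop (nhds 0) := by
  haveI : Nonempty {m : ℕ // 1 ≤ m} := ⟨⟨1, le_rfl⟩⟩
  have hinner : Tendsto (fun K : ℝ => 1 - K / 2) atTop atBot := by
    have h1 : Tendsto (fun K : ℝ => K / 2) atTop atTop := tendsto_id.atTop_div_const two_pos
    have h2 := tendsto_atBot_add_const_left atTop (1:ℝ) (tendsto_neg_atTop_atBot.comp h1)
    simpa [sub_eq_add_neg, Function.comp] using h2
  have hB : Tendsto (fun K : ℝ => 3 * (2:ℝ) ^ (1 - K/2)) atTop (nhds 0) := by
    have := ((tendsto_rpow_atBot_of_base_gt_one 2 one_lt_two).comp hinner).const_mul (3:ℝ)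
    simpa using this
  apply tendsto_of_tendsto_of_tendsto_of_le_of_le' tendsto_const_nhds hB
  · filter_upwards [eventually_ge_atTop (0:ℝ)] with K hK
    apply Real.iSup_nonneg
    intro n
    apply Finset.sum_nonneg
    intro x _
    split_ifs with h
    · have hL : 0 ≤ (1 / ((n:ℕ) : ℝ)) * Real.logb 2 (1 / p n x) := le_trans hK h.le
      have := mul_nonneg (hp n x) hL
      linarith
    · simp
  · filter_upwards [eventually_ge_atTop (2:ℝ)] with K hK
    exact ciSup_le fun n => sum_bound n n.2 K hK (p n) (hp n)
end
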